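/- Let g ∈ GL(d,ℝ), let {v_n} be a sequence of unit vectors converging to a unit vector v, and suppose g_n ∈ GL(d,ℝ) have singular value decompositions g_n = L_n Δ_n R_n with a₂(g_n)/a₁(g_n) → 0 and R_n → R_∞ (in operator norm). Then ‖g_n v_n‖/‖g_n‖ → |⟨v, R_∞* e₁⟩|. -/

import Mathlib

open scoped RealInnerProductSpace
open Filter

noncomputable section

/-- Euclidean space `ℝ^d`. -/
abbrev E (d : ℕ) := EuclideanSpace ℝ (Fin d)

/-- The operator norm of a `d × d` real matrix, acting on Euclidean space. -/
def opNorm {d : ℕ} (g : Matrix (Fin d) (Fin d) ℝ) : ℝ :=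
  ‖(Matrix.toEuclideanLin g).toContinuousLinearMap‖

/-- The action of a matrix on a Euclidean vector. -/
def act {d : ℕ} (g : Matrix (Fin d) (Fin d) ℝ) (v : E d) : E d :=
  Matrix.toEuclideanLin g v

/-- The norm of `v ∧ w` in `Λ² ℝ^d`. -/
def wedgeNorm {d : ℕ} (v w : E d) : ℝ :=
  Real.sqrt (‖v‖ ^ 2 * ‖w‖ ^ 2 - ⟪v, w⟫ ^ 2)

/-- The gap distance `d(v̄, w̄) = ‖v ∧ w‖ / (‖v‖ ‖w‖)` on projective space. -/
def gapDist {d : ℕ} (v w : E d) : ℝ := wedgeNorm v w / (‖v‖ * ‖w‖)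

/-- The operator norm of `Λ² g`, computed on the decomposable generators coming from
orthonormal pairs. -/
def lam2Norm {d : ℕ} (g : Matrix (Fin d) (Fin d) ℝ) : ℝ :=
  sSup {r | ∃ v w : E d, ‖v‖ = 1 ∧ ‖w‖ = 1 ∧ ⟪v, w⟫ = 0 ∧
    r = wedgeNorm (act g v) (act g w)}

/-- Spectral radius: the maximal absolute value of the complex eigenvalues. -/
def specRad {d : ℕ} (g : Matrix (Fin d) (Fin d) ℝ) : ℝ :=
  sSup ((fun z : ℂ => ‖z‖) '' spectrum ℂ (g.map (algebraMap ℝ ℂ)))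

/-- Singular value decomposition data: `g = L Δ R` with `L, R` orthogonal and
`Δ = diagonal a`, the `a i` positive and in decreasing order (so `a i = a_{i+1}(g)`). -/
structure SVD {d : ℕ} (g : Matrix (Fin d) (Fin d) ℝ) (L : Matrix (Fin d) (Fin d) ℝ)
    (a : Fin d → ℝ) (R : Matrix (Fin d) (Fin d) ℝ) : Prop where
  orthL : L * L.transpose = 1
  orthR : R * R.transpose = 1
  anti : Antitone a
  pos : ∀ i, 0 < a i
  eq : g = L * Matrix.diagonal a * R

/-- The `i`-th standard basis vector of `ℝ^d`. -/
def stdVec {d : ℕ} (i : Fin d) : E d := EuclideanSpace.single i 1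

lemma act_mul {d : ℕ} (A B : Matrix (Fin d) (Fin d) ℝ) (v : E d) :
    act (A * B) v = act A (act B v) := by
  simp [act, Matrix.toEuclideanLin_apply, Matrix.mulVec_mulVec]

lemma act_one {d : ℕ} (v : E d) : act 1 v = v := by
  simp [act, Matrix.toEuclideanLin_apply]

lemma inner_act_left {d : ℕ} (A : Matrix (Fin d) (Fin d) ℝ) (x y : E d) :
    ⟪act A x, y⟫ = ⟪x, act A.transpose y⟫ := by
  have h := Matrix.toEuclideanLin_conjTranspose_eq_adjoint A
  have hct : A.conjTranspose = A.transpose := by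
    ext i j; simp [Matrix.conjTranspose_apply]
  rw [← hct] at *
  rw [act, act, h]
  exact (LinearMap.adjoint_inner_right _ _ _).symm

lemma norm_sq_eq {d : ℕ} (x : E d) : ‖x‖ ^ 2 = ∑ i, (x i) ^ 2 := by
  rw [EuclideanSpace.norm_eq, Real.sq_sqrt (by positivity)]
  simp [sq_abs]

lemma act_isometry {d : ℕ} {A : Matrix (Fin d) (Fin d) ℝ}
    (hA : A * A.transpose = 1) (x : E d) : ‖act A x‖ = ‖x‖ := by
  have h' : A.transpose * A = 1 := mul_eq_one_comm.mp hA
  have : ‖act A x‖ ^ 2 = ‖x‖ ^ 2 := by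
    rw [← real_inner_self_eq_norm_sq, ← real_inner_self_eq_norm_sq,
      inner_act_left, ← act_mul, h', act_one]
  have h1 : (0:ℝ) ≤ ‖act A x‖ := norm_nonneg _
  nlinarith [norm_nonneg x]

lemma act_diagonal_apply {d : ℕ} (a : Fin d → ℝ) (x : E d) (i : Fin d) :
    act (Matrix.diagonal a) x i = a i * x i := by
  simp [act, Matrix.toEuclideanLin_apply, Matrix.mulVec_diagonal]

lemma norm_act_diagonal_sq {d : ℕ} (a : Fin d → ℝ) (x : E d) :
    ‖act (Matrix.diagonal a) x‖ ^ 2 = ∑ i, (a i * x i) ^ 2 := by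
  rw [norm_sq_eq]
  exact Finset.sum_congr rfl fun i _ => by rw [act_diagonal_apply]

lemma act_le_opNorm {d : ℕ} (g : Matrix (Fin d) (Fin d) ℝ) (x : E d) :
    ‖act g x‖ ≤ opNorm g * ‖x‖ :=
  (Matrix.toEuclideanLin g).toContinuousLinearMap.le_opNorm x

lemma norm_act_diagonal_le {d : ℕ} {a : Fin d → ℝ} {c : ℝ} (hc : 0 ≤ c)
    (h : ∀ i, |a i| ≤ c) (x : E d) :
    ‖act (Matrix.diagonal a) x‖ ≤ c * ‖x‖ := by
  apply le_of_pow_le_pow_left₀ two_ne_zero (by positivity)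
  rw [norm_act_diagonal_sq, mul_pow, norm_sq_eq, Finset.mul_sum]
  apply Finset.sum_le_sum
  intro i _
  rw [mul_pow]
  have : (a i) ^ 2 ≤ c ^ 2 := by
    rw [← sq_abs]; exact pow_le_pow_left₀ (abs_nonneg _) (h i) 2
  nlinarith [sq_nonneg (x i)]

lemma opNorm_svd {d : ℕ} (hd : 0 < d) {g L : Matrix (Fin d) (Fin d) ℝ}
    {a : Fin d → ℝ} {R : Matrix (Fin d) (Fin d) ℝ}
    (orthL : L * L.transpose = 1) (orthR : R * R.transpose = 1)
    (anti : Antitone a) (pos : ∀ i, 0 < a i)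
    (heq : g = L * Matrix.diagonal a * R) :
    opNorm g = a ⟨0, hd⟩ := by
  set i0 : Fin d := ⟨0, hd⟩
  have ha0 : 0 < a i0 := pos i0
  have hact : ∀ x : E d, act g x = act L (act (Matrix.diagonal a) (act R x)) := by
    intro x; rw [heq, act_mul, act_mul]
  apply le_antisymm
  · apply ContinuousLinearMap.opNorm_le_bound _ ha0.le
    intro x
    show ‖act g x‖ ≤ a i0 * ‖x‖
    rw [hact, act_isometry orthL, ← act_isometry orthR x]
    exact norm_act_diagonal_le ha0.le
      (fun i => by rw [abs_of_pos (pos i)]; exact anti (show i0 ≤ i from by simp [i0, Fin.le_def])) _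
  · have hR' : R.transpose * (R.transpose).transpose = 1 := by
      rw [Matrix.transpose_transpose]; exact mul_eq_one_comm.mp orthR
    have h1 : act R (act R.transpose (stdVec i0)) = stdVec i0 := by
      rw [← act_mul, orthR, act_one]
    have h2 : act (Matrix.diagonal a) (stdVec i0) = EuclideanSpace.single i0 (a i0) := by
      ext j
      rw [act_diagonal_apply]
      simp [stdVec, EuclideanSpace.single_apply]
      split <;> simp_all
    have h3 : ‖act g (act R.transpose (stdVec i0))‖ = a i0 := by
      rw [hact, h1, h2, act_isometry orthL, EuclideanSpace.norm_single,
        Real.norm_eq_abs, abs_of_pos ha0]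
    have h4 : ‖act R.transpose (stdVec i0)‖ = 1 := by
      rw [act_isometry hR']
      simp [stdVec, EuclideanSpace.norm_single]
    have := act_le_opNorm g (act R.transpose (stdVec i0))
    rw [h3, h4, mul_one] at this
    exact this

lemma coord_abs_le_norm {d : ℕ} (x : E d) (i : Fin d) : |x i| ≤ ‖x‖ := by
  apply le_of_pow_le_pow_left₀ two_ne_zero (norm_nonneg _)
  rw [norm_sq_eq, sq_abs]
  exact Finset.single_le_sum (fun j _ => sq_nonneg (x j)) (Finset.mem_univ i)

lemma act_sub_left {d : ℕ} (A B : Matrix (Fin d) (Fin d) ℝ) (x : E d) :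
    act (A - B) x = act A x - act B x := by
  simp [act, map_sub]

/-- If `gₙ = Lₙ Δₙ Rₙ` are SVDs with `a₂(gₙ)/a₁(gₙ) → 0` and `Rₙ → R_∞` in operator norm,
and `vₙ` are unit vectors converging to a unit vector `v`, then
`‖gₙ vₙ‖/‖gₙ‖ → |⟨v, R_∞* e₁⟩|`. -/
theorem stmt_9 {d : ℕ} (hd : 2 ≤ d) (g L R : ℕ → Matrix (Fin d) (Fin d) ℝ)
    (a : ℕ → Fin d → ℝ) (hginv : ∀ n, IsUnit (g n))
    (hsvd : ∀ n, SVD (g n) (L n) (a n) (R n))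
    (Rinf : Matrix (Fin d) (Fin d) ℝ)
    (hR : Tendsto (fun n => opNorm (R n - Rinf)) atTop (nhds 0))
    (hratio : Tendsto (fun n => a n ⟨1, by omega⟩ / a n ⟨0, by omega⟩) atTop (nhds 0))
    (v : E d) (hv : ‖v‖ = 1) (vs : ℕ → E d) (hvs : ∀ n, ‖vs n‖ = 1)
    (hconv : Tendsto vs atTop (nhds v)) :
    Tendsto (fun n => ‖act (g n) (vs n)‖ / opNorm (g n)) atTop
      (nhds |⟪v, act Rinf.transpose (stdVec ⟨0, by omega⟩)⟫|) := by
  have hd0 : 0 < d := by omega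
  set i0 : Fin d := ⟨0, by omega⟩ with hi0
  set i1 : Fin d := ⟨1, by omega⟩ with hi1
  set w : ℕ → E d := fun n => act (R n) (vs n) with hw
  set winf : E d := act Rinf v with hwinf
  have ha0 : ∀ n, 0 < a n i0 := fun n => (hsvd n).pos i0
  have hop : ∀ n, opNorm (g n) = a n i0 := fun n =>
    opNorm_svd hd0 (hsvd n).orthL (hsvd n).orthR (hsvd n).anti (hsvd n).pos (hsvd n).eq
  have hnorm : ∀ n, ‖act (g n) (vs n)‖ = ‖act (Matrix.diagonal (a n)) (w n)‖ := by
    intro n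
    rw [(hsvd n).eq, act_mul, act_mul, act_isometry (hsvd n).orthL]
  have hwnorm : ∀ n, ‖w n‖ = 1 := fun n => by
    rw [hw]; rw [act_isometry (hsvd n).orthR, hvs]
  -- convergence of w to winf
  have hwconv : Tendsto w atTop (nhds winf) := by
    have h1 : Tendsto (fun n => act Rinf (vs n)) atTop (nhds winf) := by
      exact ((Matrix.toEuclideanLin Rinf).toContinuousLinearMap.continuous.tendsto v).comp hconv
    have h2 : Tendsto (fun n => w n - act Rinf (vs n)) atTop (nhds 0) := by
      refine squeeze_zero_norm (fun n => ?_) hR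
      rw [← act_sub_left]
      calc ‖act (R n - Rinf) (vs n)‖ ≤ opNorm (R n - Rinf) * ‖vs n‖ := act_le_opNorm _ _
        _ = opNorm (R n - Rinf) := by rw [hvs, mul_one]
    have := h2.add h1
    simpa using this
  have hcoord : Tendsto (fun n => w n i0) atTop (nhds (winf i0)) := by
    rw [tendsto_iff_norm_sub_tendsto_zero] at hwconv ⊢
    apply squeeze_zero (fun n => norm_nonneg _) _ hwconv
    intro n
    have : w n i0 - winf i0 = (w n - winf) i0 := by simp
    rw [Real.norm_eq_abs, this]
    exact coord_abs_le_norm _ _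
  -- the squared quantity
  set f : ℕ → ℝ := fun n => ‖act (Matrix.diagonal (a n)) (w n)‖ / a n i0 with hf
  have hfnonneg : ∀ n, 0 ≤ f n := fun n => div_nonneg (norm_nonneg _) (ha0 n).le
  have hq : ∀ n, f n ^ 2 = (∑ i, (a n i * w n i) ^ 2) / (a n i0) ^ 2 := by
    intro n
    rw [hf, div_pow, norm_act_diagonal_sq]
  have hql : ∀ n, (w n i0) ^ 2 ≤ f n ^ 2 := by
    intro n
    rw [hq, le_div_iff₀ (by have := ha0 n; positivity)]
    have h := Finset.single_le_sum (f := fun i => (a n i * w n i) ^ 2)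
      (fun j _ => sq_nonneg _) (Finset.mem_univ i0)
    have hx : (a n i0 * w n i0) ^ 2 = w n i0 ^ 2 * a n i0 ^ 2 := by ring
    simp only at h
    linarith [h, hx]
  have hqu : ∀ n, f n ^ 2 ≤ (w n i0) ^ 2 + (a n i1 / a n i0) ^ 2 := by
    intro n
    rw [hq, div_le_iff₀ (by have := ha0 n; positivity)]
    have hsplit : (∑ i, (a n i * w n i) ^ 2) =
        (a n i0 * w n i0) ^ 2 + ∑ i ∈ Finset.univ.erase i0, (a n i * w n i) ^ 2 :=
      (Finset.add_sum_erase _ _ (Finset.mem_univ i0)).symm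
    have hbound : ∑ i ∈ Finset.univ.erase i0, (a n i * w n i) ^ 2
        ≤ (a n i1) ^ 2 * ∑ i ∈ Finset.univ.erase i0, (w n i) ^ 2 := by
      rw [Finset.mul_sum]
      apply Finset.sum_le_sum
      intro i hi
      have hne : i ≠ i0 := Finset.ne_of_mem_erase hi
      have h1i : i1 ≤ i := by
        rw [Fin.le_def]
        have : i.val ≠ 0 := fun h => hne (Fin.ext h)
        simp [hi1]; omega
      have hai : a n i ≤ a n i1 := (hsvd n).anti h1i
      have hpos := (hsvd n).pos i
      rw [mul_pow]
      exact mul_le_mul_of_nonneg_right (by nlinarith) (sq_nonneg _)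
    have hsum1 : ∑ i ∈ Finset.univ.erase i0, (w n i) ^ 2 ≤ 1 := by
      have : ∑ i ∈ Finset.univ.erase i0, (w n i) ^ 2 ≤ ∑ i, (w n i) ^ 2 :=
        Finset.sum_le_sum_of_subset_of_nonneg (Finset.erase_subset _ _)
          (fun j _ _ => sq_nonneg _)
      rw [← norm_sq_eq, hwnorm n] at this
      simpa using this
    have ha1 : 0 < a n i1 := (hsvd n).pos i1
    have ha0n := ha0 n
    have h5 : (a n i1) ^ 2 * (∑ i ∈ Finset.univ.erase i0, (w n i) ^ 2) ≤ (a n i1) ^ 2 :=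
      (mul_le_mul_of_nonneg_left hsum1 (sq_nonneg _)).trans_eq (mul_one _)
    have hexp : ((w n i0) ^ 2 + (a n i1 / a n i0) ^ 2) * a n i0 ^ 2
        = (a n i0 * w n i0) ^ 2 + a n i1 ^ 2 := by
      field_simp
    rw [hexp]
    linarith
  have hsq : Tendsto (fun n => f n ^ 2) atTop (nhds ((winf i0) ^ 2)) := by
    have hlow : Tendsto (fun n => (w n i0) ^ 2) atTop (nhds ((winf i0) ^ 2)) :=
      hcoord.pow 2
    have hup : Tendsto (fun n => (w n i0) ^ 2 + (a n i1 / a n i0) ^ 2) atTop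
        (nhds ((winf i0) ^ 2)) := by
      have := hlow.add (hratio.pow 2)
      simpa using this
    exact tendsto_of_tendsto_of_tendsto_of_le_of_le hlow hup hql hqu
  have hftends : Tendsto f atTop (nhds |winf i0|) := by
    have := (Real.continuous_sqrt.tendsto ((winf i0) ^ 2)).comp hsq
    rw [Real.sqrt_sq_eq_abs] at this
    apply this.congr
    intro n
    exact Real.sqrt_sq (hfnonneg n)
  have hfinal : |winf i0| = |⟪v, act Rinf.transpose (stdVec i0)⟫| := by
    have h1 : ⟪winf, stdVec i0⟫ = winf i0 := by
      rw [stdVec, EuclideanSpace.inner_single_right]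
      simp
    rw [← inner_act_left, h1]
  rw [← hfinal]
  apply hftends.congr
  intro n
  rw [hnorm n, hop n]
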